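/- Let γ > 0 and t ∈ [0,1], and define φ_t(z) = t·z^{1+γ} + (1−t)·z for z ≥ 0. Then: (a) φ_t is strictly increasing and convex on [0,∞), with φ_t(1) = 1 and φ_t'(z) = t(1+γ)z^γ + (1−t); (b) for all probability densities p, q with 0 < ‖p‖_{1+γ} < ∞ and ⟨q p^γ⟩ < ∞, the norm-based Bregman density power cross-entropy with φ_t equals the convex combination of the density power and pseudo-spherical cross-entropies: −(φ_t(‖p‖_{1+γ}) − 1)/γ − φ_t'(‖p‖_{1+γ})·(⟨q p^γ⟩ − ⟨p^{1+γ}⟩)/(γ·‖p‖_{1+γ}^γ) = t·d^{DP}_γ(q,p) + (1−t)·d^{PS}_γ(q,p). -/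

import Mathlib

open MeasureTheory Filter Real Topology Set

/-- A probability density w.r.t. a measure `ν`: measurable, nonnegative, integrating to 1. -/
def IsProbDensity {X : Type*} [MeasurableSpace X] (ν : Measure X) (p : X → ℝ) : Prop :=
  Measurable p ∧ (∀ x, 0 ≤ p x) ∧ ∫ x, p x ∂ν = 1

/-- `⟨f^{1+γ}⟩ = ∫ f(x)^{1+γ} dν`. -/
noncomputable def powInt {X : Type*} [MeasurableSpace X] (ν : Measure X) (γ : ℝ) (p : X → ℝ) : ℝ :=
  ∫ x, p x ^ (1 + γ) ∂ν

/-- `⟨q p^γ⟩ = ∫ q(x) p(x)^γ dν`. -/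
noncomputable def crossInt {X : Type*} [MeasurableSpace X] (ν : Measure X) (γ : ℝ)
    (q p : X → ℝ) : ℝ :=
  ∫ x, q x * p x ^ γ ∂ν

/-- `‖f‖_{1+γ} = ⟨f^{1+γ}⟩^{1/(1+γ)}`. -/
noncomputable def lnorm {X : Type*} [MeasurableSpace X] (ν : Measure X) (γ : ℝ) (p : X → ℝ) : ℝ :=
  (powInt ν γ p) ^ (1 / (1 + γ))


/-- The density power cross-entropy (DPCE). -/
noncomputable def dDP {X : Type*} [MeasurableSpace X] (ν : Measure X) (γ : ℝ)
    (q p : X → ℝ) : ℝ :=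
  -((1 + γ) / γ) * crossInt ν γ q p + 1 / γ + powInt ν γ p

/-- The pseudo-spherical cross-entropy (PSCE). -/
noncomputable def dPS {X : Type*} [MeasurableSpace X] (ν : Measure X) (γ : ℝ)
    (q p : X → ℝ) : ℝ :=
  -(1 / γ) * (crossInt ν γ q p / lnorm ν γ p ^ γ) + 1 / γ

/-- with `φ_t(z) = t z^{1+γ} + (1−t) z`: (a) `φ_t` is strictly increasing and
convex on `[0,∞)`, `φ_t(1) = 1`, and `φ_t'(z) = t(1+γ)z^γ + (1−t)` for `z ≥ 0`; (b) the
NB-DPCE with `φ_t` is the convex combination of the density power and pseudo-spherical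
cross-entropies. -/
theorem nbdpce_mixture_dp_ps {X : Type*} [MeasurableSpace X] (ν : Measure X) [SigmaFinite ν]
    (γ t : ℝ) (hγ : 0 < γ) (ht0 : 0 ≤ t) (ht1 : t ≤ 1) :
    let φ : ℝ → ℝ := fun z => t * z ^ (1 + γ) + (1 - t) * z
    (StrictMonoOn φ (Set.Ici 0) ∧ ConvexOn ℝ (Set.Ici 0) φ ∧ φ 1 = 1 ∧
      ∀ z : ℝ, 0 ≤ z → HasDerivAt φ (t * (1 + γ) * z ^ γ + (1 - t)) z) ∧
    ∀ p q : X → ℝ, IsProbDensity ν p → IsProbDensity ν q →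
      0 < powInt ν γ p → Integrable (fun x => p x ^ (1 + γ)) ν →
      Integrable (fun x => q x * p x ^ γ) ν →
      -(φ (lnorm ν γ p) - 1) / γ -
          deriv φ (lnorm ν γ p) * (crossInt ν γ q p - powInt ν γ p) / (γ * lnorm ν γ p ^ γ) =
        t * dDP ν γ q p + (1 - t) * dPS ν γ q p := by
  intro φ
  have h1γ : (1:ℝ) ≤ 1 + γ := by linarith
  have hderiv : ∀ z : ℝ, HasDerivAt φ (t * (1 + γ) * z ^ γ + (1 - t)) z := by
    intro z
    have h1 : HasDerivAt (fun z : ℝ => z ^ (1+γ)) ((1+γ) * z ^ ((1+γ)-1)) z :=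
      Real.hasDerivAt_rpow_const (Or.inr h1γ)
    have h2 := ((h1.const_mul t).add ((hasDerivAt_id z).const_mul (1-t)))
    simpa [φ, Pi.add_def, mul_comm, mul_assoc, mul_left_comm, show (1+γ)-1 = γ by ring] using h2
  refine ⟨⟨?_, ?_, ?_, fun z _ => hderiv z⟩, ?_⟩
  · apply strictMonoOn_of_deriv_pos (convex_Ici 0)
    · exact Continuous.continuousOn ((continuous_const.mul (continuous_id.rpow_const
        (fun x => Or.inr (by linarith)))).add (continuous_const.mul continuous_id))
    · intro x hx
      rw [interior_Ici] at hx
      rw [(hderiv x).deriv]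
      rcases eq_or_lt_of_le ht1 with h | h
      · have hxγ : (0:ℝ) < x ^ γ := Real.rpow_pos_of_pos hx γ
        subst h
        nlinarith
      · have h0 : (0:ℝ) ≤ t * (1+γ) * x ^ γ := by
          have := Real.rpow_nonneg (le_of_lt hx) γ
          positivity
        linarith
  · have hc : ConvexOn ℝ (Set.Ici 0) (fun z : ℝ => z ^ (1+γ)) := convexOn_rpow h1γ
    have hl : ConvexOn ℝ (Set.Ici (0:ℝ)) (fun z : ℝ => (1 - t) * z) :=
      (ConvexOn.smul (by linarith) (convexOn_id (convex_Ici 0)))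
    simpa [φ, Pi.add_def, smul_eq_mul] using (hc.smul ht0).add hl
  · simp [φ]
  · intro p q hp hq hP hint1 hint2
    set N := lnorm ν γ p with hN
    set A := crossInt ν γ q p with hA
    set P := powInt ν γ p with hPdef
    have hγ0 : γ ≠ 0 := ne_of_gt hγ
    have h1γ0 : (1:ℝ) + γ ≠ 0 := by positivity
    have hNpos : 0 < N := Real.rpow_pos_of_pos hP _
    have hNP : N ^ (1 + γ) = P := by
      rw [hN, lnorm, ← Real.rpow_mul hP.le, one_div,
        inv_mul_cancel₀ h1γ0, Real.rpow_one]
    have hNP' : P = N * N ^ γ := by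
      rw [← hNP, Real.rpow_add hNpos, Real.rpow_one]
    have hMpos : 0 < N ^ γ := Real.rpow_pos_of_pos hNpos γ
    rw [(hderiv N).deriv]
    show -(t * N ^ (1+γ) + (1 - t) * N - 1) / γ -
        (t * (1 + γ) * N ^ γ + (1 - t)) * (A - P) / (γ * N ^ γ) =
        t * dDP ν γ q p + (1 - t) * dPS ν γ q p
    rw [hNP, dDP, dPS, ← hA, ← hPdef, ← hN]
    rw [hNP']
    field_simp
    ring
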